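/- Let n ≥ 1 and let S⁺, S⁻ : ℝⁿ → ℝ be C² functions. Define x(u,v) = ½(u + v, ∇S⁺(u) + ∇S⁻(v)) and y(u,v) = ½(u − v, ∇S⁺(u) − ∇S⁻(v)) as maps ℝⁿ × ℝⁿ → ℝⁿ × ℝⁿ, and define f(u,v) = ½S⁺(u) − ½S⁻(v) − ¼⟨u − v, ∇S⁺(u) + ∇S⁻(v)⟩. Then for all (u,v) and all indices i, j: ∂f/∂uᵢ(u,v) = ω(∂x/∂uᵢ(u,v), y(u,v)) and ∂f/∂vⱼ(u,v) = ω(∂x/∂vⱼ(u,v), y(u,v)). -/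

import Mathlib

open scoped BigOperators

/-- The canonical symplectic form on `ℝⁿ × ℝⁿ`:
`ω((a,b),(c,d)) = ⟨a,d⟩ − ⟨b,c⟩`. -/
noncomputable def symp (n : ℕ) (a b : (Fin n → ℝ) × (Fin n → ℝ)) : ℝ :=
  (∑ i, a.1 i * b.2 i) - (∑ i, a.2 i * b.1 i)

set_option maxHeartbeats 1000000 in
theorem stmt1 (n : ℕ) (hn : 1 ≤ n)
    (Sp Sm : (Fin n → ℝ) → ℝ) (hSp : ContDiff ℝ 2 Sp) (hSm : ContDiff ℝ 2 Sm)
    (gradp gradm : (Fin n → ℝ) → (Fin n → ℝ))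
    (hgp : ∀ (u : Fin n → ℝ) (i : Fin n), gradp u i = fderiv ℝ Sp u (Pi.single i 1))
    (hgm : ∀ (v : Fin n → ℝ) (i : Fin n), gradm v i = fderiv ℝ Sm v (Pi.single i 1))
    (x y : (Fin n → ℝ) × (Fin n → ℝ) → (Fin n → ℝ) × (Fin n → ℝ))
    (f : (Fin n → ℝ) × (Fin n → ℝ) → ℝ)
    (hx : ∀ u v, x (u, v) = (((1:ℝ)/2) • (u + v), ((1:ℝ)/2) • (gradp u + gradm v)))
    (hy : ∀ u v, y (u, v) = (((1:ℝ)/2) • (u - v), ((1:ℝ)/2) • (gradp u - gradm v)))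
    (hf : ∀ u v, f (u, v) =
      (1/2) * Sp u - (1/2) * Sm v - (1/4) * ∑ i, (u i - v i) * (gradp u i + gradm v i)) :
    ∀ (u v : Fin n → ℝ) (i j : Fin n),
      fderiv ℝ f (u, v) (Pi.single i 1, 0) =
        symp n (fderiv ℝ x (u, v) (Pi.single i 1, 0)) (y (u, v)) ∧
      fderiv ℝ f (u, v) (0, Pi.single j 1) =
        symp n (fderiv ℝ x (u, v) (0, Pi.single j 1)) (y (u, v)) := by
  classical
  have hgp' : gradp = fun w k => fderiv ℝ Sp w (Pi.single k 1) := by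
    funext w k; exact hgp w k
  have hgm' : gradm = fun w k => fderiv ℝ Sm w (Pi.single k 1) := by
    funext w k; exact hgm w k
  subst hgp' hgm'
  intro u v i j
  -- differentiability
  have hSp1 : Differentiable ℝ Sp := hSp.differentiable (by norm_num)
  have hSm1 : Differentiable ℝ Sm := hSm.differentiable (by norm_num)
  have hGp : Differentiable ℝ (fderiv ℝ Sp) :=
    (hSp.fderiv_right (m := 1) (by norm_num)).differentiable one_ne_zero
  have hGm : Differentiable ℝ (fderiv ℝ Sm) :=
    (hSm.fderiv_right (m := 1) (by norm_num)).differentiable one_ne_zero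
  set Dp := fderiv ℝ (fderiv ℝ Sp) u with hDpdef
  set Dm := fderiv ℝ (fderiv ℝ Sm) v with hDmdef
  -- basic pieces at (u,v)
  have hP1 : HasFDerivAt (fun p : (Fin n → ℝ) × (Fin n → ℝ) => Sp p.1)
      ((fderiv ℝ Sp u).comp (ContinuousLinearMap.fst ℝ (Fin n → ℝ) (Fin n → ℝ))) (u, v) :=
    (hSp1 u).hasFDerivAt.comp (u, v) hasFDerivAt_fst
  have hP2 : HasFDerivAt (fun p : (Fin n → ℝ) × (Fin n → ℝ) => Sm p.2)
      ((fderiv ℝ Sm v).comp (ContinuousLinearMap.snd ℝ (Fin n → ℝ) (Fin n → ℝ))) (u, v) :=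
    (hSm1 v).hasFDerivAt.comp (u, v) hasFDerivAt_snd
  have hGp' : HasFDerivAt (fun p : (Fin n → ℝ) × (Fin n → ℝ) => fderiv ℝ Sp p.1)
      (Dp.comp (ContinuousLinearMap.fst ℝ (Fin n → ℝ) (Fin n → ℝ))) (u, v) :=
    (hGp u).hasFDerivAt.comp (u, v) hasFDerivAt_fst
  have hGm' : HasFDerivAt (fun p : (Fin n → ℝ) × (Fin n → ℝ) => fderiv ℝ Sm p.2)
      (Dm.comp (ContinuousLinearMap.snd ℝ (Fin n → ℝ) (Fin n → ℝ))) (u, v) :=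
    (hGm v).hasFDerivAt.comp (u, v) hasFDerivAt_snd
  have hBp : ∀ k : Fin n, HasFDerivAt (fun p : (Fin n → ℝ) × (Fin n → ℝ) => fderiv ℝ Sp p.1 (Pi.single k 1))
      (((fderiv ℝ Sp u).comp (0 : (Fin n → ℝ) × (Fin n → ℝ) →L[ℝ] (Fin n → ℝ))) +
        (Dp.comp (ContinuousLinearMap.fst ℝ (Fin n → ℝ) (Fin n → ℝ))).flip (Pi.single k 1)) (u, v) := fun k =>
    hGp'.clm_apply (hasFDerivAt_const _ _)
  have hBm : ∀ k : Fin n, HasFDerivAt (fun p : (Fin n → ℝ) × (Fin n → ℝ) => fderiv ℝ Sm p.2 (Pi.single k 1))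
      (((fderiv ℝ Sm v).comp (0 : (Fin n → ℝ) × (Fin n → ℝ) →L[ℝ] (Fin n → ℝ))) +
        (Dm.comp (ContinuousLinearMap.snd ℝ (Fin n → ℝ) (Fin n → ℝ))).flip (Pi.single k 1)) (u, v) := fun k =>
    hGm'.clm_apply (hasFDerivAt_const _ _)
  have hA : ∀ k : Fin n, HasFDerivAt (fun p : (Fin n → ℝ) × (Fin n → ℝ) => p.1 k - p.2 k)
      (((ContinuousLinearMap.proj k).comp (ContinuousLinearMap.fst ℝ (Fin n → ℝ) (Fin n → ℝ))) -
        ((ContinuousLinearMap.proj k).comp (ContinuousLinearMap.snd ℝ (Fin n → ℝ) (Fin n → ℝ)))) (u, v) := fun k => by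
    refine (((ContinuousLinearMap.proj k).comp (ContinuousLinearMap.fst ℝ (Fin n → ℝ) (Fin n → ℝ))) -
        ((ContinuousLinearMap.proj k).comp (ContinuousLinearMap.snd ℝ (Fin n → ℝ) (Fin n → ℝ)))).hasFDerivAt.congr_of_eventuallyEq
      (Filter.Eventually.of_forall fun p => ?_)
    simp
  -- derivative of f
  have hfeq : f = fun p : (Fin n → ℝ) × (Fin n → ℝ) => (1/2) * Sp p.1 - (1/2) * Sm p.2 -
      (1/4) * ∑ k, (p.1 k - p.2 k) *
        (fderiv ℝ Sp p.1 (Pi.single k 1) + fderiv ℝ Sm p.2 (Pi.single k 1)) := by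
    funext p
    obtain ⟨a, b⟩ := p
    exact hf a b
  have hF : HasFDerivAt f
      ((1/2 : ℝ) • ((fderiv ℝ Sp u).comp (ContinuousLinearMap.fst ℝ (Fin n → ℝ) (Fin n → ℝ))) -
       (1/2 : ℝ) • ((fderiv ℝ Sm v).comp (ContinuousLinearMap.snd ℝ (Fin n → ℝ) (Fin n → ℝ))) -
       (1/4 : ℝ) • ∑ k, ((u k - v k) •
            (((fderiv ℝ Sp u).comp (0 : (Fin n → ℝ) × (Fin n → ℝ) →L[ℝ] (Fin n → ℝ))) +
              (Dp.comp (ContinuousLinearMap.fst ℝ (Fin n → ℝ) (Fin n → ℝ))).flip (Pi.single k 1) +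
             (((fderiv ℝ Sm v).comp (0 : (Fin n → ℝ) × (Fin n → ℝ) →L[ℝ] (Fin n → ℝ))) +
              (Dm.comp (ContinuousLinearMap.snd ℝ (Fin n → ℝ) (Fin n → ℝ))).flip (Pi.single k 1))) +
          (fderiv ℝ Sp u (Pi.single k 1) + fderiv ℝ Sm v (Pi.single k 1)) •
            (((ContinuousLinearMap.proj k).comp (ContinuousLinearMap.fst ℝ (Fin n → ℝ) (Fin n → ℝ))) -
             ((ContinuousLinearMap.proj k).comp (ContinuousLinearMap.snd ℝ (Fin n → ℝ) (Fin n → ℝ)))))) (u, v) := by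
    rw [hfeq]
    exact ((hP1.const_mul _).sub (hP2.const_mul _)).sub
      ((HasFDerivAt.fun_sum (fun k _ => (hA k).mul ((hBp k).add (hBm k)))).const_mul _)
  -- derivative of x
  have hxeq : x = fun p : (Fin n → ℝ) × (Fin n → ℝ) => (((1:ℝ)/2) • (p.1 + p.2),
      ((1:ℝ)/2) • ((fun k => fderiv ℝ Sp p.1 (Pi.single k 1)) +
        (fun k => fderiv ℝ Sm p.2 (Pi.single k 1)))) := by
    funext p
    obtain ⟨a, b⟩ := p
    exact hx a b
  have hX : HasFDerivAt x
      (((1/2 : ℝ) • (ContinuousLinearMap.fst ℝ (Fin n → ℝ) (Fin n → ℝ) + ContinuousLinearMap.snd ℝ (Fin n → ℝ) (Fin n → ℝ))).prod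
       ((1/2 : ℝ) • (ContinuousLinearMap.pi (fun k =>
          ((fderiv ℝ Sp u).comp (0 : (Fin n → ℝ) × (Fin n → ℝ) →L[ℝ] (Fin n → ℝ))) +
            (Dp.comp (ContinuousLinearMap.fst ℝ (Fin n → ℝ) (Fin n → ℝ))).flip (Pi.single k 1) +
          (((fderiv ℝ Sm v).comp (0 : (Fin n → ℝ) × (Fin n → ℝ) →L[ℝ] (Fin n → ℝ))) +
            (Dm.comp (ContinuousLinearMap.snd ℝ (Fin n → ℝ) (Fin n → ℝ))).flip (Pi.single k 1)))))) (u, v) := by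
    rw [hxeq]
    have h := (((hasFDerivAt_fst (p := (u, v))).add (hasFDerivAt_snd (p := (u, v)))).const_smul
      ((1:ℝ)/2)).prodMk ((hasFDerivAt_pi.2 (fun k => (hBp k).add (hBm k))).const_smul ((1:ℝ)/2))
    refine h.congr_of_eventuallyEq (Filter.Eventually.of_forall fun p => ?_)
    ext <;> simp
  have r1 : ∀ (D : (Fin n → ℝ) →L[ℝ] ℝ) (w : Fin n → ℝ),
      (∑ x : Fin n, 2⁻¹ * D (Pi.single x 1) * (2⁻¹ * w x)) =
        ∑ x : Fin n, 4⁻¹ * (w x * D (Pi.single x 1)) :=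
    fun D w => Finset.sum_congr rfl fun x _ => by ring
  rw [hF.fderiv, hX.fderiv, hy]
  constructor
  · simp [symp, ContinuousLinearMap.sub_apply, ContinuousLinearMap.add_apply,
      ContinuousLinearMap.smul_apply, ContinuousLinearMap.comp_apply,
      ContinuousLinearMap.flip_apply, ContinuousLinearMap.sum_apply,
      ContinuousLinearMap.proj_apply, ContinuousLinearMap.pi_apply,
      Pi.single_apply, Finset.mul_sum, Finset.sum_sub_distrib, mul_ite,
      Finset.sum_ite_eq', ite_mul, mul_sub, sub_mul, add_mul, mul_add,
      Finset.sum_add_distrib]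
    rw [r1 _ u, r1 _ v]
    ring
  · simp [symp, ContinuousLinearMap.sub_apply, ContinuousLinearMap.add_apply,
      ContinuousLinearMap.smul_apply, ContinuousLinearMap.comp_apply,
      ContinuousLinearMap.flip_apply, ContinuousLinearMap.sum_apply,
      ContinuousLinearMap.proj_apply, ContinuousLinearMap.pi_apply,
      Pi.single_apply, Finset.mul_sum, Finset.sum_sub_distrib, mul_ite,
      Finset.sum_ite_eq', ite_mul, mul_sub, sub_mul, add_mul, mul_add,
      Finset.sum_add_distrib]
    rw [r1 _ u, r1 _ v]
    ring
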